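/- Let A, B ∈ ℤ with 4A³ + 27B² ≠ 0, and let E be the elliptic curve y² = x³ + Ax + B. If a, b ∈ ℤ satisfy A = 6ab + 27a⁴ and B = b² − 27a⁶, then the point (3a², 9a³ + b) lies on E and is a 3-torsion point (it satisfies 3P = O). -/

import Mathlib

theorem explicit_three_torsion_point
    (A B a b : ℤ) (hΔ : 4 * A ^ 3 + 27 * B ^ 2 ≠ 0)
    (hA : A = 6 * a * b + 27 * a ^ 4) (hB : B = b ^ 2 - 27 * a ^ 6) :
    let W : WeierstrassCurve ℚ := ⟨0, 0, 0, (A : ℚ), (B : ℚ)⟩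
    W.toAffine.Equation (3 * (a : ℚ) ^ 2) (9 * (a : ℚ) ^ 3 + (b : ℚ)) ∧
      ∀ h : W.toAffine.Nonsingular (3 * (a : ℚ) ^ 2) (9 * (a : ℚ) ^ 3 + (b : ℚ)),
        3 • WeierstrassCurve.Affine.Point.some _ _ h = 0 := by
  intro W
  set x : ℚ := 3 * (a : ℚ) ^ 2 with hxdef
  set y : ℚ := 9 * (a : ℚ) ^ 3 + (b : ℚ) with hydef
  have hy0 : y ≠ 0 := by
    intro h
    apply hΔ
    have hb : (b : ℚ) = -(9 * (a : ℚ) ^ 3) := by linarith [h]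
    have hbz : b = -(9 * a ^ 3) := by exact_mod_cast hb
    rw [hA, hB, hbz]; ring
  have heq : W.toAffine.Equation x y := by
    rw [WeierstrassCurve.Affine.equation_iff]
    show y ^ 2 + 0 * x * y + 0 * y = x ^ 3 + 0 * x ^ 2 + (A : ℚ) * x + (B : ℚ)
    rw [hxdef, hydef, hA, hB]
    push_cast
    ring
  refine ⟨heq, fun h => ?_⟩
  have hnegY : W.toAffine.negY x y = -y := by
    show -y - 0 * x - 0 = -y; ring
  have hy : y ≠ W.toAffine.negY x y := by
    rw [hnegY]
    intro hc
    apply hy0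
    linarith [hc]
  have hslope : W.toAffine.slope x x y y = 3 * (a : ℚ) := by
    rw [WeierstrassCurve.Affine.slope_of_Y_ne rfl hy, hnegY]
    show (3 * x ^ 2 + 2 * 0 * x + (A : ℚ) - 0 * y) / (y - -y) = 3 * (a : ℚ)
    rw [div_eq_iff (by intro hc; apply hy0; linarith)]
    rw [hxdef, hydef, hA]
    push_cast
    ring
  have hx : W.toAffine.addX x x (W.toAffine.slope x x y y) = x := by
    rw [hslope]
    show (3 * (a : ℚ)) ^ 2 + 0 * (3 * (a : ℚ)) - 0 - x - x = x
    rw [hxdef]; ring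
  have haddY : W.toAffine.addY x x y (W.toAffine.slope x x y y) = W.toAffine.negY x y := by
    rw [WeierstrassCurve.Affine.addY, WeierstrassCurve.Affine.negAddY, hx, hslope, hnegY]
    show -(3 * (a : ℚ) * (x - x) + y) - 0 * x - 0 = -y
    ring
  have h3 : (3 : ℕ) • WeierstrassCurve.Affine.Point.some _ _ h =
      WeierstrassCurve.Affine.Point.some _ _ h + WeierstrassCurve.Affine.Point.some _ _ h +
        WeierstrassCurve.Affine.Point.some _ _ h := by
    rw [show (3 : ℕ) = 2 + 1 from rfl, add_nsmul, two_nsmul, one_nsmul]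
  rw [h3, WeierstrassCurve.Affine.Point.add_self_of_Y_ne hy]
  exact WeierstrassCurve.Affine.Point.add_of_Y_eq hx haddY
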